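/- Geometric covering lemma on the circle: for every measurable set E ⊆ T with |E| > 0 there exists a measurable F ⊆ E with |F| > 0 such that for all r ∈ [0,1) and all ξ ∈ F, |J(rξ) ∩ E| / |J(rξ)| ≥ |E|/(2^4 π), where for re^{iθ} ∈ D, J(re^{iθ}) = {e^{it} : |t−θ| ≤ π(1−r)} is the arc of length 2π(1−r) centered at e^{iθ}. -/

import Mathlib

open MeasureTheory Set Filter Real
open scoped ENNReal NNReal

/-- Arc-length measure on the unit circle, as the pushforward of Lebesgue measure on
`[0, 2π)` under `θ ↦ e^{iθ}`. -/
noncomputable def circleMeasure : MeasureTheory.Measure ℂ :=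
  MeasureTheory.Measure.map (fun θ : ℝ => Complex.exp (θ * Complex.I))
    (MeasureTheory.volume.restrict (Set.Ico 0 (2 * Real.pi)))

/-- For `re^{iθ} ∈ D`, the associated arc `J(re^{iθ}) = {e^{it} : |t − θ| ≤ π(1−r)}`. -/
def arcJ (r θ : ℝ) : Set ℂ :=
  {z | ∃ t : ℝ, |t - θ| ≤ Real.pi * (1 - r) ∧ z = Complex.exp (t * Complex.I)}

lemma eMeasurable : Measurable (fun θ : ℝ => Complex.exp (θ * Complex.I)) := by
  fun_prop

lemma circleMeasure_apply {S : Set ℂ} (hS : MeasurableSet S) :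
    circleMeasure S
      = volume ((fun θ : ℝ => Complex.exp (θ * Complex.I)) ⁻¹' S ∩ Set.Ico 0 (2 * Real.pi)) := by
  rw [circleMeasure, Measure.map_apply eMeasurable hS,
    Measure.restrict_apply (eMeasurable hS)]

lemma circleMeasure_le (S : Set ℂ) (hS : MeasurableSet S) :
    circleMeasure S ≤ ENNReal.ofReal (2 * Real.pi) := by
  rw [circleMeasure_apply hS]
  calc volume _ ≤ volume (Set.Ico (0:ℝ) (2*Real.pi)) := measure_mono inter_subset_right
  _ = ENNReal.ofReal (2*Real.pi) := by simp

lemma circleMeasure_ne_top (S : Set ℂ) (hS : MeasurableSet S) : circleMeasure S ≠ ⊤ :=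
  fun h => by
    have := circleMeasure_le S hS; rw [h, top_le_iff] at this; exact ENNReal.ofReal_ne_top this

lemma periodic_measure_shift {S : Set ℝ} (hS : MeasurableSet S)
    (hper : ∀ g : AddSubgroup.zmultiples (2*Real.pi), (fun x => (g:ℝ) +ᵥ x) ⁻¹' S = S) (a : ℝ) :
    volume (S ∩ Set.Ico a (a + 2*Real.pi)) = volume (S ∩ Set.Ico 0 (2*Real.pi)) := by
  have h2pi : (0:ℝ) < 2*Real.pi := by positivity
  have key : ∀ b : ℝ, volume (S ∩ Set.Ico b (b + 2*Real.pi)) = volume (S ∩ Set.Ioc b (b + 2*Real.pi)) := by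
    intro b
    refine measure_congr (Filter.EventuallyEq.inter (by rfl) Ico_ae_eq_Ioc)
  rw [key a, show volume (S ∩ Set.Ico 0 (2*Real.pi)) = volume (S ∩ Set.Ioc 0 (0 + 2*Real.pi)) by
    simpa using key 0]
  exact MeasureTheory.IsAddFundamentalDomain.measure_set_eq
    (isAddFundamentalDomain_Ioc h2pi a) (isAddFundamentalDomain_Ioc h2pi 0) hS hper

lemma e_add_int (x : ℝ) (k : ℤ) :
    Complex.exp ((x + k * (2*Real.pi)) * Complex.I) = Complex.exp (x * Complex.I) := by
  push_cast
  rw [add_mul, Complex.exp_add]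
  have : (k:ℂ) * (2*(Real.pi:ℂ)) * Complex.I = k * (2*(Real.pi:ℂ)*Complex.I) := by ring
  rw [this, Complex.exp_int_mul_two_pi_mul_I, mul_one]

lemma e_add_int' (x : ℝ) (k : ℤ) :
    Complex.exp (((x:ℂ) + (k:ℂ) * (2*(Real.pi:ℂ))) * Complex.I) = Complex.exp ((x:ℝ) * Complex.I) := by
  have := e_add_int x k
  push_cast at this
  exact this

lemma e_add_int_real (x : ℝ) (k : ℤ) :
    Complex.exp (((x + k * (2*Real.pi) : ℝ) : ℂ) * Complex.I) = Complex.exp ((x:ℝ) * Complex.I) := by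
  push_cast
  exact e_add_int' x k

lemma e_eq_iff {x t : ℝ} :
    Complex.exp (x * Complex.I) = Complex.exp (t * Complex.I) ↔ ∃ n : ℤ, x = t + n * (2*Real.pi) := by
  rw [Complex.exp_eq_exp_iff_exists_int]
  constructor
  · rintro ⟨n, hn⟩
    refine ⟨n, ?_⟩
    have h2 : (x:ℂ) * Complex.I = ((t + n*(2*Real.pi):ℝ):ℂ) * Complex.I := by
      push_cast; rw [hn]; ring
    have h3 := mul_right_cancel₀ Complex.I_ne_zero h2
    exact_mod_cast h3
  · rintro ⟨n, hn⟩
    exact ⟨n, by rw [hn]; push_cast; ring⟩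

lemma preimage_periodic (W : Set ℂ) (g : AddSubgroup.zmultiples (2*Real.pi)) :
    (fun x => (g:ℝ) +ᵥ x) ⁻¹' ((fun θ : ℝ => Complex.exp (θ * Complex.I)) ⁻¹' W)
      = (fun θ : ℝ => Complex.exp (θ * Complex.I)) ⁻¹' W := by
  obtain ⟨k, hk⟩ := AddSubgroup.mem_zmultiples_iff.mp g.2
  ext x
  simp only [mem_preimage, vadd_eq_add]
  have : (g:ℝ) + x = x + k * (2*Real.pi) := by rw [← hk]; push_cast [zsmul_eq_mul]; ring
  rw [this]
  push_cast
  rw [e_add_int']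

lemma arcJ_eq_image (r θ : ℝ) :
    arcJ r θ = (fun t : ℝ => Complex.exp (t * Complex.I)) ''
      Set.Icc (θ - Real.pi*(1-r)) (θ + Real.pi*(1-r)) := by
  ext z
  simp only [arcJ, mem_setOf_eq, mem_image, mem_Icc]
  constructor
  · rintro ⟨t, ht, rfl⟩; exact ⟨t, by rw [abs_sub_le_iff] at ht; constructor <;> linarith [ht.1, ht.2], rfl⟩
  · rintro ⟨t, ht, rfl⟩; exact ⟨t, by rw [abs_sub_le_iff]; constructor <;> linarith [ht.1, ht.2], rfl⟩

lemma arcJ_measurable (r θ : ℝ) : MeasurableSet (arcJ r θ) := by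
  rw [arcJ_eq_image]
  have hc : Continuous (fun t : ℝ => Complex.exp (t * Complex.I)) := by fun_prop
  exact (isCompact_Icc.image hc).isClosed.measurableSet

lemma circleMeasure_arc_inter (S : Set ℂ) (hSm : MeasurableSet S) {r : ℝ} (θ : ℝ)
    (hr : r ∈ Set.Ico (0:ℝ) 1) :
    circleMeasure (arcJ r θ ∩ S)
      = volume ((fun t : ℝ => Complex.exp (t * Complex.I)) ⁻¹' S
          ∩ Set.Icc (θ - Real.pi*(1-r)) (θ + Real.pi*(1-r))) := by
  set e : ℝ → ℂ := fun t => Complex.exp (t * Complex.I) with he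
  set h : ℝ := Real.pi*(1-r) with hh
  have hπ := Real.pi_pos
  have hpos : 0 < h := by
    have : 0 < 1 - r := by linarith [hr.2]
    positivity
  have hle : h ≤ Real.pi := by
    have : 1 - r ≤ 1 := by linarith [hr.1]
    nlinarith
  have hWm : MeasurableSet (arcJ r θ ∩ S) := (arcJ_measurable r θ).inter hSm
  rw [circleMeasure_apply hWm]
  have hUm : MeasurableSet (e ⁻¹' (arcJ r θ ∩ S)) := eMeasurable hWm
  have shift := periodic_measure_shift hUm (fun g => preimage_periodic _ g) (θ - h)
  rw [← shift]
  have hsub1 : e ⁻¹' S ∩ Set.Ico (θ-h) (θ+h)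
      ⊆ e ⁻¹' (arcJ r θ ∩ S) ∩ Set.Ico (θ-h) (θ-h + 2*Real.pi) := by
    rintro x ⟨hxS, hx1, hx2⟩
    refine ⟨⟨⟨x, ?_, rfl⟩, hxS⟩, hx1, by linarith⟩
    rw [abs_sub_le_iff]; constructor <;> linarith
  have hsub2 : e ⁻¹' (arcJ r θ ∩ S) ∩ Set.Ico (θ-h) (θ-h + 2*Real.pi)
      ⊆ e ⁻¹' S ∩ Set.Icc (θ-h) (θ+h) := by
    rintro x ⟨⟨⟨t, ht, hxt⟩, hxS⟩, hx1, hx2⟩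
    refine ⟨hxS, hx1, ?_⟩
    obtain ⟨n, hn⟩ := e_eq_iff.mp hxt
    rw [abs_sub_le_iff] at ht
    rcases lt_trichotomy n 0 with hn0 | hn0 | hn0
    · have : (n:ℝ) ≤ -1 := by exact_mod_cast Int.le_sub_one_of_lt hn0
      nlinarith
    · subst hn0; push_cast at hn; linarith
    · have : (1:ℝ) ≤ (n:ℝ) := by exact_mod_cast hn0
      nlinarith
  have heq : volume (e ⁻¹' S ∩ Set.Ico (θ-h) (θ+h)) = volume (e ⁻¹' S ∩ Set.Icc (θ-h) (θ+h)) :=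
    measure_congr (Filter.EventuallyEq.inter (by rfl) Ico_ae_eq_Icc)
  refine le_antisymm ?_ ?_
  · exact le_trans (measure_mono hsub2) (le_of_eq rfl)
  · rw [← heq]; exact measure_mono hsub1

lemma circleMeasure_arc {r : ℝ} (θ : ℝ) (hr : r ∈ Set.Ico (0:ℝ) 1) :
    circleMeasure (arcJ r θ) = ENNReal.ofReal (2 * (Real.pi * (1-r))) := by
  have := circleMeasure_arc_inter univ MeasurableSet.univ θ hr
  simp only [inter_univ, preimage_univ, univ_inter] at this
  rw [this, Real.volume_Icc]
  ring_nf

lemma vitali_overlap {ι : Type*} (x r : ι → ℝ) (K : Set ℝ) (t : Finset ι)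
    (hcov : K ⊆ ⋃ i ∈ t, Metric.ball (x i) (r i)) :
    ∃ s ⊆ t, (K ⊆ ⋃ i ∈ s, Metric.ball (x i) (r i)) ∧
      ∀ y : ℝ, ∀ u ⊆ s, (∀ i ∈ u, y ∈ Metric.ball (x i) (r i)) → u.card ≤ 2 := by
  classical
  set B : ι → Set ℝ := fun i => Metric.ball (x i) (r i) with hB
  set S : Finset (Finset ι) := t.powerset.filter (fun s => K ⊆ ⋃ i ∈ s, B i) with hS
  have htS : t ∈ S := by
    simp only [hS, Finset.mem_filter, Finset.mem_powerset]
    exact ⟨le_refl t, hcov⟩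
  obtain ⟨s, hsS, hmin⟩ := Finset.exists_min_image S Finset.card ⟨t, htS⟩
  simp only [hS, Finset.mem_filter, Finset.mem_powerset] at hsS
  refine ⟨s, hsS.1, hsS.2, ?_⟩
  intro y u hus hu
  by_contra hcard
  push_neg at hcard
  obtain ⟨v, hvu, hv3⟩ := Finset.exists_subset_card_eq (show 3 ≤ u.card from hcard)
  have hvs : v ⊆ s := hvu.trans hus
  have hvball : ∀ i ∈ v, y ∈ B i := fun i hi => hu i (hvu hi)
  have hvne : v.Nonempty := Finset.card_pos.mp (by omega)
  obtain ⟨j, hjv, hjmin⟩ := Finset.exists_min_image v (fun i => x i - r i) hvne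
  obtain ⟨k, hkv, hkmax⟩ := Finset.exists_max_image v (fun i => x i + r i) hvne
  have hlv : (v \ ({j, k} : Finset ι)).Nonempty := by
    refine Finset.card_pos.mp ?_
    have h1 : v.card ≤ (v \ ({j,k} : Finset ι)).card + ({j,k} : Finset ι).card :=
      Finset.card_le_card_sdiff_add_card
    have h2 : ({j,k} : Finset ι).card ≤ 2 := Finset.card_insert_le _ _ |>.trans (by simp)
    omega
  obtain ⟨l, hl⟩ := hlv
  rw [Finset.mem_sdiff] at hl
  obtain ⟨hlv', hlnot⟩ := hl
  simp only [Finset.mem_insert, Finset.mem_singleton, not_or] at hlnot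
  have hyj : y ∈ B j := hvball j hjv
  have hyk : y ∈ B k := hvball k hkv
  have hyl : y ∈ B l := hvball l hlv'
  simp only [hB, Real.ball_eq_Ioo, mem_Ioo] at hyj hyk hyl
  have hsub : B l ⊆ B j ∪ B k := by
    intro z hz
    simp only [hB, Real.ball_eq_Ioo, mem_Ioo] at hz
    simp only [hB, Real.ball_eq_Ioo, mem_union, mem_Ioo]
    rcases le_or_gt z y with hzy | hzy
    · left
      exact ⟨lt_of_le_of_lt (hjmin l hlv') hz.1, lt_of_le_of_lt hzy hyj.2⟩
    · right
      exact ⟨lt_trans hyk.1 hzy, lt_of_lt_of_le hz.2 (hkmax l hlv')⟩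
  have hcov' : K ⊆ ⋃ i ∈ s.erase l, B i := by
    intro z hz
    obtain ⟨i, hi, hzi⟩ := Set.mem_iUnion₂.mp (hsS.2 hz)
    by_cases hil : i = l
    · subst hil
      rcases hsub hzi with hzj | hzk
      · exact Set.mem_iUnion₂.mpr ⟨j, Finset.mem_erase.mpr ⟨fun hc => hlnot.1 hc.symm, hvs hjv⟩, hzj⟩
      · exact Set.mem_iUnion₂.mpr ⟨k, Finset.mem_erase.mpr ⟨fun hc => hlnot.2 hc.symm, hvs hkv⟩, hzk⟩
    · exact Set.mem_iUnion₂.mpr ⟨i, Finset.mem_erase.mpr ⟨hil, hi⟩, hzi⟩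
  have herase : s.erase l ∈ S := by
    simp only [hS, Finset.mem_filter, Finset.mem_powerset]
    exact ⟨(Finset.erase_subset l s).trans hsS.1, hcov'⟩
  have := hmin _ herase
  have hls : l ∈ s := hvs hlv'
  have : (s.erase l).card < s.card := Finset.card_erase_lt_of_mem hls
  omega

lemma sum_measure_balls_le {ι : Type*} (x r : ι → ℝ) (s : Finset ι) (a b : ℝ)
    (hsub : ∀ i ∈ s, Metric.ball (x i) (r i) ⊆ Set.Icc a b)
    (hover : ∀ y : ℝ, ∀ u ⊆ s, (∀ i ∈ u, y ∈ Metric.ball (x i) (r i)) → u.card ≤ 2) :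
    ∑ i ∈ s, volume (Metric.ball (x i) (r i)) ≤ 2 * volume (Set.Icc a b) := by
  classical
  set B : ι → Set ℝ := fun i => Metric.ball (x i) (r i) with hB
  have hmeas : ∀ i, MeasurableSet (B i) := fun i => Metric.isOpen_ball.measurableSet
  have h1 : ∀ i ∈ s, volume (B i) = ∫⁻ y, (B i).indicator (fun _ => (1:ℝ≥0∞)) y := by
    intro i _
    rw [lintegral_indicator (hmeas i)]
    simp
  rw [Finset.sum_congr rfl h1, ← lintegral_finset_sum s
    (fun i _ => (Measurable.indicator measurable_const (hmeas i)))]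
  have h2 : (2 : ℝ≥0∞) * volume (Set.Icc a b)
      = ∫⁻ y, (Set.Icc a b).indicator (fun _ => (2:ℝ≥0∞)) y := by
    rw [lintegral_indicator measurableSet_Icc]
    simp [mul_comm]
  rw [h2]
  refine lintegral_mono fun y => ?_
  by_cases hy : y ∈ Set.Icc a b
  · have : ∑ i ∈ s, (B i).indicator (fun _ => (1:ℝ≥0∞)) y
        = ((s.filter (fun i => y ∈ B i)).card : ℝ≥0∞) := by
      rw [Finset.card_filter]
      push_cast
      refine Finset.sum_congr rfl fun i _ => ?_
      by_cases hyB : y ∈ B i <;> simp [hyB]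
    rw [this, Set.indicator_of_mem hy]
    have hcard : (s.filter (fun i => y ∈ B i)).card ≤ 2 :=
      hover y _ (Finset.filter_subset _ _) (fun i hi => (Finset.mem_filter.mp hi).2)
    exact (by exact_mod_cast hcard : ((s.filter (fun i => y ∈ B i)).card : ℝ≥0∞) ≤ 2)
  · have : ∀ i ∈ s, (B i).indicator (fun _ => (1:ℝ≥0∞)) y = 0 := by
      intro i hi
      refine Set.indicator_of_notMem (fun hyB => hy (hsub i hi hyB)) _
    rw [Finset.sum_congr rfl this]
    simp

lemma measurable_G {S : Set ℝ} (hS : MeasurableSet S) (q : ℝ) :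
    Measurable (fun x => volume (S ∩ Set.Icc (x-q) (x+q))) := by
  have hT : MeasurableSet {p : ℝ × ℝ | p.2 ∈ S ∧ p.1 - q ≤ p.2 ∧ p.2 ≤ p.1 + q} := by
    refine MeasurableSet.inter (measurable_snd hS) (MeasurableSet.inter ?_ ?_)
    · exact measurableSet_le (measurable_fst.sub measurable_const) measurable_snd
    · exact measurableSet_le measurable_snd (measurable_fst.add measurable_const)
  have h2 := measurable_measure_prodMk_left (ν := volume) hT
  have : (fun x => volume (S ∩ Set.Icc (x-q) (x+q)))
      = fun x => volume (Prod.mk x ⁻¹' {p : ℝ × ℝ | p.2 ∈ S ∧ p.1 - q ≤ p.2 ∧ p.2 ≤ p.1 + q}) := by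
    funext x
    have hset : Prod.mk x ⁻¹' {p : ℝ × ℝ | p.2 ∈ S ∧ p.1 - q ≤ p.2 ∧ p.2 ≤ p.1 + q}
        = S ∩ Set.Icc (x-q) (x+q) := by
      ext z
      simp only [Set.mem_preimage, Set.mem_setOf_eq, Set.mem_inter_iff, Set.mem_Icc]
    rw [hset]
  rw [this]
  exact h2

lemma enlarge_bad {S : Set ℝ} (hS : MeasurableSet S) (x q c : ℝ) (hc : 0 < c)
    (hbad : volume (S ∩ Set.Icc (x-q) (x+q)) < ENNReal.ofReal (2*c*q)) :
    ∃ ρ, q < ρ ∧ ρ ≤ q + 1 ∧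
      volume (S ∩ Metric.ball x ρ) ≤ ENNReal.ofReal c * volume (Metric.ball x ρ) := by
  have hInter : (⋂ ρ > q, (S ∩ Set.Ioo (x-ρ) (x+ρ))) = S ∩ Set.Icc (x-q) (x+q) := by
    ext z
    simp only [Set.mem_iInter, Set.mem_inter_iff, Set.mem_Ioo, Set.mem_Icc]
    constructor
    · intro hz
      have h1 := hz (q+1) (by linarith)
      refine ⟨h1.1, ?_, ?_⟩
      · by_contra hcon
        push_neg at hcon
        have := (hz (x - z) (by linarith)).2.1
        linarith
      · by_contra hcon
        push_neg at hcon
        have := (hz (z - x) (by linarith)).2.2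
        linarith
    · rintro ⟨hzE, hz1, hz2⟩ ρ hρ
      exact ⟨hzE, by linarith, by linarith⟩
  have htend : Tendsto (fun ρ => volume (S ∩ Set.Ioo (x-ρ) (x+ρ))) (nhdsWithin q (Set.Ioi q))
      (nhds (volume (S ∩ Set.Icc (x-q) (x+q)))) := by
    rw [← hInter]
    refine tendsto_measure_biInter_gt (fun ρ _ => ?_) (fun i j hi hij => ?_) ⟨q+1, by linarith, ?_⟩
    · exact (hS.inter measurableSet_Ioo).nullMeasurableSet
    · exact Set.inter_subset_inter_right _ (Set.Ioo_subset_Ioo (by linarith) (by linarith))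
    · exact ne_top_of_le_ne_top (by simp) (measure_mono Set.inter_subset_right)
  have hev1 : ∀ᶠ ρ in nhdsWithin q (Set.Ioi q),
      volume (S ∩ Set.Ioo (x-ρ) (x+ρ)) < ENNReal.ofReal (2*c*q) :=
    htend.eventually_lt_const hbad
  have hev2 : ∀ᶠ ρ in nhdsWithin q (Set.Ioi q), ρ ∈ Set.Ioo q (q+1) :=
    Ioo_mem_nhdsGT_of_mem ⟨le_refl q, by linarith⟩
  obtain ⟨ρ, hρ1, hρ2⟩ := (hev1.and hev2).exists
  refine ⟨ρ, hρ2.1, le_of_lt hρ2.2, ?_⟩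
  rw [Real.ball_eq_Ioo, Real.volume_Ioo]
  have harith : (x + ρ) - (x - ρ) = 2*ρ := by ring
  rw [harith, ← ENNReal.ofReal_mul (le_of_lt hc)]
  calc volume (S ∩ Set.Ioo (x-ρ) (x+ρ)) ≤ ENNReal.ofReal (2*c*q) := le_of_lt hρ1
  _ ≤ ENNReal.ofReal (c * (2*ρ)) := by
      refine ENNReal.ofReal_le_ofReal (by nlinarith [hρ2.1])
/-- Geometric covering lemma on the circle: for every measurable `E ⊆ T` with `|E| > 0`
there is a measurable `F ⊆ E` with `|F| > 0` such that for all `r ∈ [0,1)` and all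
`ξ = e^{iθ} ∈ F`, `|J(rξ) ∩ E| / |J(rξ)| ≥ |E|/(2⁴π)`. -/
theorem circle_density_lemma (E : Set ℂ)
    (hE : E ⊆ Metric.sphere (0:ℂ) 1) (hEm : MeasurableSet E)
    (hEpos : 0 < (circleMeasure E).toReal) :
    ∃ F : Set ℂ, F ⊆ E ∧ MeasurableSet F ∧ 0 < (circleMeasure F).toReal ∧
      ∀ r ∈ Set.Ico (0:ℝ) 1, ∀ θ : ℝ, Complex.exp (θ * Complex.I) ∈ F →
        (circleMeasure (arcJ r θ ∩ E)).toReal / (circleMeasure (arcJ r θ)).toReal ≥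
          (circleMeasure E).toReal / (2 ^ 4 * Real.pi) := by
  classical
  have hπ := Real.pi_pos
  have hπ3 := Real.pi_gt_three
  set Ep : Set ℝ := (fun θ : ℝ => Complex.exp (θ * Complex.I)) ⁻¹' E with hEp
  have hEpm : MeasurableSet Ep := eMeasurable hEm
  set m : ℝ := (circleMeasure E).toReal with hmdef
  have hm : 0 < m := hEpos
  have hEne : circleMeasure E ≠ ⊤ := circleMeasure_ne_top E hEm
  have hEofReal : circleMeasure E = ENNReal.ofReal m := (ENNReal.ofReal_toReal hEne).symm
  set c : ℝ := m / (16 * Real.pi) with hcdef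
  have hc : 0 < c := by positivity
  set A : Set ℝ := Ep ∩ Set.Ico 0 (2*Real.pi) with hA
  have hAm : MeasurableSet A := hEpm.inter measurableSet_Ico
  have hvolA : volume A = ENNReal.ofReal m := by
    rw [← hEofReal, circleMeasure_apply hEm]
  set G : ℝ → ℝ → ℝ≥0∞ := fun x q => volume (Ep ∩ Set.Icc (x-q) (x+q)) with hG
  have hGmono : ∀ x (q q' : ℝ), q ≤ q' → G x q ≤ G x q' := fun x q q' h =>
    measure_mono (Set.inter_subset_inter_right _ (Set.Icc_subset_Icc (by linarith) (by linarith)))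
  have hGne : ∀ x q, G x q ≠ ⊤ := fun x q =>
    (lt_of_le_of_lt (measure_mono Set.inter_subset_right) measure_Icc_lt_top).ne
  set Bad : Set ℝ := A ∩ ⋃ (q : ℚ),
    {x | 0 < (q:ℝ) ∧ (q:ℝ) ≤ Real.pi + 1 ∧ G x (q:ℝ) < ENNReal.ofReal (2*c*q)} with hBadDef
  have hBadm : MeasurableSet Bad := by
    refine hAm.inter (MeasurableSet.iUnion fun q => ?_)
    have : {x | 0 < (q:ℝ) ∧ (q:ℝ) ≤ Real.pi + 1 ∧ G x (q:ℝ) < ENNReal.ofReal (2*c*q)}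
        = ({x | 0 < (q:ℝ)} ∩ {x | (q:ℝ) ≤ Real.pi + 1}) ∩
          {x | G x (q:ℝ) < ENNReal.ofReal (2*c*q)} := by
      ext z; simp only [Set.mem_setOf_eq, Set.mem_inter_iff]; tauto
    rw [this]
    refine MeasurableSet.inter (MeasurableSet.inter (MeasurableSet.const _) (MeasurableSet.const _)) ?_
    exact measurableSet_lt (measurable_G hEpm (q:ℝ)) measurable_const
  have hBadsubA : Bad ⊆ A := Set.inter_subset_left
  have hBadne : volume Bad ≠ ⊤ :=
    (lt_of_le_of_lt (measure_mono (hBadsubA.trans Set.inter_subset_right)) measure_Ico_lt_top).ne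
  have hε6 : (ENNReal.ofReal (m/6)) ≠ 0 := (ENNReal.ofReal_pos.mpr (by positivity)).ne'
  -- the covering bound
  have hBadvol : volume Bad ≤ ENNReal.ofReal (5*m/6) := by
    obtain ⟨K', hK'sub, hK'comp, hK'lt⟩ := hBadm.exists_isCompact_lt_add hBadne hε6
    have hradius : ∀ x ∈ Bad, ∃ ρ, 0 < ρ ∧ ρ ≤ Real.pi + 2 ∧
        volume (Ep ∩ Metric.ball x ρ) ≤ ENNReal.ofReal c * volume (Metric.ball x ρ) := by
      intro x hx
      obtain ⟨q, hq1, hq2, hq3⟩ := Set.mem_iUnion.mp hx.2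
      obtain ⟨ρ, hρ1, hρ2, hρ3⟩ := enlarge_bad hEpm x (q:ℝ) c hc hq3
      exact ⟨ρ, lt_trans hq1 hρ1, by linarith, hρ3⟩
    choose! R hR1 hR2 hR3 using hradius
    have hcovK' : K' ⊆ ⋃ x ∈ K', Metric.ball x (R x) := fun x hx =>
      Set.mem_biUnion hx (Metric.mem_ball_self (hR1 x (hK'sub hx)))
    obtain ⟨b, hbsub, hbfin, hbcov⟩ := hK'comp.elim_finite_subcover_image
      (fun x _ => Metric.isOpen_ball) hcovK'
    have hbcov' : K' ⊆ ⋃ i ∈ hbfin.toFinset, Metric.ball (id i) (R i) := by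
      intro z hz
      obtain ⟨i, hi, hzi⟩ := Set.mem_iUnion₂.mp (hbcov hz)
      exact Set.mem_iUnion₂.mpr ⟨i, hbfin.mem_toFinset.mpr hi, hzi⟩
    obtain ⟨s, hst, hscov, hover⟩ := vitali_overlap id R K' hbfin.toFinset hbcov'
    have hsmemBad : ∀ i ∈ s, i ∈ Bad := fun i hi =>
      hK'sub (hbsub (hbfin.mem_toFinset.mp (hst hi)))
    have hsum1 : volume K' ≤ ∑ i ∈ s, volume (Ep ∩ Metric.ball (id i) (R i)) := by
      calc volume K' ≤ volume (⋃ i ∈ s, K' ∩ Metric.ball (id i) (R i)) := by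
            refine measure_mono (fun z hz => ?_)
            obtain ⟨i, hi, hzi⟩ := Set.mem_iUnion₂.mp (hscov hz)
            exact Set.mem_iUnion₂.mpr ⟨i, hi, hz, hzi⟩
      _ ≤ ∑ i ∈ s, volume (K' ∩ Metric.ball (id i) (R i)) := measure_biUnion_finset_le _ _
      _ ≤ ∑ i ∈ s, volume (Ep ∩ Metric.ball (id i) (R i)) := by
            refine Finset.sum_le_sum (fun i _ => measure_mono (Set.inter_subset_inter_left _ ?_))
            exact fun z hz => (hK'sub hz).1.1
    have hsum2 : ∑ i ∈ s, volume (Ep ∩ Metric.ball (id i) (R i))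
        ≤ ENNReal.ofReal c * ∑ i ∈ s, volume (Metric.ball (id i) (R i)) := by
      rw [Finset.mul_sum]
      exact Finset.sum_le_sum (fun i hi => hR3 i (hsmemBad i hi))
    have hsum3 : ∑ i ∈ s, volume (Metric.ball (id i) (R i))
        ≤ 2 * volume (Set.Icc (-(Real.pi+2)) (2*Real.pi + (Real.pi+2))) := by
      refine sum_measure_balls_le id R s _ _ (fun i hi => ?_) hover
      have hiBad := hsmemBad i hi
      have hiA : i ∈ Set.Ico (0:ℝ) (2*Real.pi) := (hBadsubA hiBad).2
      have hRi1 := hR1 i hiBad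
      have hRi2 := hR2 i hiBad
      intro z hz
      rw [Metric.mem_ball, Real.dist_eq, abs_sub_lt_iff] at hz
      simp only [id] at hz ⊢
      constructor
      · have := hiA.1; linarith [hz.2]
      · have := hiA.2; linarith [hz.1]
    have hfinal : volume K' ≤ ENNReal.ofReal (2*m/3) := by
      calc volume K' ≤ ENNReal.ofReal c *
          (2 * volume (Set.Icc (-(Real.pi+2)) (2*Real.pi + (Real.pi+2)))) :=
            le_trans hsum1 (le_trans hsum2 (mul_le_mul_right hsum3 _))
      _ = ENNReal.ofReal c * ENNReal.ofReal (2*(4*Real.pi+4)) := by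
            rw [Real.volume_Icc]
            rw [← ENNReal.ofReal_ofNat, ← ENNReal.ofReal_mul (by norm_num)]
            norm_num
            ring_nf
      _ = ENNReal.ofReal (c * (2*(4*Real.pi+4))) := by
            rw [← ENNReal.ofReal_mul (le_of_lt hc)]
      _ ≤ ENNReal.ofReal (2*m/3) := by
            refine ENNReal.ofReal_le_ofReal ?_
            rw [hcdef]
            rw [div_mul_eq_mul_div, div_le_div_iff₀ (by positivity) (by norm_num)]
            nlinarith
    calc volume Bad ≤ volume K' + ENNReal.ofReal (m/6) := le_of_lt hK'lt
    _ ≤ ENNReal.ofReal (2*m/3) + ENNReal.ofReal (m/6) := add_le_add hfinal le_rfl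
    _ = ENNReal.ofReal (5*m/6) := by
        rw [← ENNReal.ofReal_add (by positivity) (by positivity)]
        norm_num
        ring_nf
  -- the good set
  set Good : Set ℝ := A \ Bad with hGoodDef
  have hGoodm : MeasurableSet Good := hAm.diff hBadm
  have hGoodvol : ENNReal.ofReal (m/6) ≤ volume Good := by
    rw [hGoodDef, measure_diff hBadsubA hBadm.nullMeasurableSet hBadne, hvolA]
    refine ENNReal.le_sub_of_add_le_right hBadne ?_
    calc ENNReal.ofReal (m/6) + volume Bad ≤ ENNReal.ofReal (m/6) + ENNReal.ofReal (5*m/6) :=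
          add_le_add le_rfl hBadvol
    _ = ENNReal.ofReal m := by
        rw [← ENNReal.ofReal_add (by positivity) (by positivity)]
        congr 1
        ring
  have hGoodne : volume Good ≠ ⊤ :=
    (lt_of_le_of_lt (measure_mono ((Set.diff_subset).trans Set.inter_subset_right))
      measure_Ico_lt_top).ne
  obtain ⟨K, hKsub, hKcomp, hKlt⟩ := hGoodm.exists_isCompact_lt_add hGoodne hε6
  have hKpos : 0 < volume K := by
    rcases eq_or_lt_of_le ((zero_le : 0 ≤ volume K)) with h0 | h0
    · exfalso
      rw [← h0, zero_add] at hKlt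
      exact absurd hGoodvol (not_le.mpr hKlt)
    · exact h0
  have hecont : Continuous (fun θ : ℝ => Complex.exp (θ * Complex.I)) := by fun_prop
  refine ⟨(fun θ : ℝ => Complex.exp (θ * Complex.I)) '' K, ?_, ?_, ?_, ?_⟩
  · rintro z ⟨x, hxK, rfl⟩
    exact (hKsub hxK).1.1
  · exact ((hKcomp.image hecont).isClosed).measurableSet
  · have hFm : MeasurableSet ((fun θ : ℝ => Complex.exp (θ * Complex.I)) '' K) :=
      ((hKcomp.image hecont).isClosed).measurableSet
    have hle : volume K ≤ circleMeasure ((fun θ : ℝ => Complex.exp (θ * Complex.I)) '' K) := by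
      rw [circleMeasure_apply hFm]
      refine measure_mono (fun x hx => ⟨Set.subset_preimage_image _ K hx, ((hKsub hx).1).2⟩)
    exact ENNReal.toReal_pos (lt_of_lt_of_le hKpos hle).ne' (circleMeasure_ne_top _ hFm)
  · rintro r hr θ hθ
    obtain ⟨x, hxK, hxe⟩ := hθ
    set h : ℝ := Real.pi * (1 - r) with hhdef
    have hh0 : 0 < h := by
      have : 0 < 1 - r := by linarith [hr.2]
      positivity
    have hhπ : h ≤ Real.pi := by
      have : 1 - r ≤ 1 := by linarith [hr.1]
      nlinarith
    have harc : circleMeasure (arcJ r θ) = ENNReal.ofReal (2*h) := circleMeasure_arc θ hr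
    have harcE : circleMeasure (arcJ r θ ∩ E) = G θ h := circleMeasure_arc_inter E hEm θ hr
    obtain ⟨n, hn⟩ := e_eq_iff.mp hxe
    have hGtrans : G θ h = G x h := by
      have hpre : (fun z : ℝ => z + (n:ℝ)*(2*Real.pi)) ⁻¹' (Ep ∩ Set.Icc (x-h) (x+h))
          = Ep ∩ Set.Icc (θ-h) (θ+h) := by
        ext z
        simp only [Set.mem_preimage, Set.mem_inter_iff, Set.mem_Icc, hEp]
        constructor
        · rintro ⟨h1, h2, h3⟩
          rw [e_add_int_real z n] at h1
          exact ⟨h1, by rw [hn] at h2; linarith, by rw [hn] at h3; linarith⟩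
        · rintro ⟨h1, h2, h3⟩
          rw [e_add_int_real z n]
          exact ⟨h1, by rw [hn]; linarith, by rw [hn]; linarith⟩
      rw [hG]
      simp only
      rw [← hpre, measure_preimage_add_right]
    have hxGood : x ∈ Good := hKsub hxK
    have hgood : ∀ q : ℚ, 0 < (q:ℝ) → (q:ℝ) ≤ Real.pi+1 → ENNReal.ofReal (2*c*q) ≤ G x (q:ℝ) := by
      intro q h1 h2
      by_contra hcon
      push_neg at hcon
      exact hxGood.2 ⟨hxGood.1, Set.mem_iUnion.mpr ⟨q, h1, h2, hcon⟩⟩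
    have hkey : 2*c*h ≤ (G x h).toReal := by
      by_contra hcon
      push_neg at hcon
      set M := (G x h).toReal with hM
      have hM0 : 0 ≤ M := ENNReal.toReal_nonneg
      have hch : max (M / (2*c)) 0 < h := by
        refine max_lt ?_ hh0
        rw [div_lt_iff₀ (by positivity)]
        nlinarith
      obtain ⟨q, hq1, hq2⟩ := exists_rat_btwn hch
      have hq0 : 0 < (q:ℝ) := lt_of_le_of_lt (le_max_right _ _) hq1
      have hqπ : (q:ℝ) ≤ Real.pi + 1 := by linarith
      have hb := hgood q hq0 hqπ
      have hb2 : ENNReal.ofReal (2*c*q) ≤ G x h := le_trans hb (hGmono x _ _ (le_of_lt hq2))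
      have hb3 : 2*c*(q:ℝ) ≤ M := by
        rw [hM]
        rw [← ENNReal.ofReal_le_iff_le_toReal (hGne x h)] at *
        exact hb2
      have hq1' : M / (2*c) < (q:ℝ) := lt_of_le_of_lt (le_max_left _ _) hq1
      rw [div_lt_iff₀ (by positivity)] at hq1'
      nlinarith
    rw [harc, harcE, hGtrans, ENNReal.toReal_ofReal (by positivity)]
    rw [ge_iff_le, show (2:ℝ)^4 * Real.pi = 16 * Real.pi by norm_num, ← hcdef]
    rw [le_div_iff₀ (by positivity)]
    calc c * (2*h) = 2*c*h := by ring
    _ ≤ (G x h).toReal := hkey
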